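/- Let A be an m×n complex matrix of rank r. Then there exist injective index maps ρ : Fin r → Fin m and γ : Fin r → Fin n such that the r×r submatrix A(ρ,γ) is invertible and A factors exactly as A = A(:,γ) · A(ρ,γ)⁻¹ · A(ρ,:), i.e. the skeleton (hybrid interpolative/CUR) decomposition K ≈ U K(τ̄,ν̄) V of the paper holds with equality in the exact-rank case. -/

import Mathlib

open Submodule Set Matrix

lemma exists_subfamily {V : Type*} [AddCommGroup V] [Module ℂ V] {n r : ℕ} (v : Fin n → V)
    (h : Module.finrank ℂ (Submodule.span ℂ (Set.range v)) = r) :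
    ∃ γ : Fin r → Fin n, Function.Injective (v ∘ γ) ∧ LinearIndependent ℂ (v ∘ γ) ∧
      Submodule.span ℂ (Set.range (v ∘ γ)) = Submodule.span ℂ (Set.range v) := by
  obtain ⟨s, hsub, hspan, hind⟩ := exists_linearIndependent ℂ (Set.range v)
  have hfin : s.Finite := (Set.finite_range v).subset hsub
  haveI := hfin.fintype
  have hcard : Fintype.card s = r := by
    rw [← Set.toFinset_card, ← finrank_span_set_eq_card hind, hspan, h]
  obtain ⟨e⟩ : Nonempty (Fin r ≃ s) := ⟨(Fintype.equivFinOfCardEq hcard).symm⟩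
  have hchoice : ∀ i : Fin r, ∃ j : Fin n, v j = (e i : V) := fun i => hsub (e i).2
  choose γ hγ using hchoice
  have hvγ : v ∘ γ = fun i => ((e i : V)) := funext fun i => hγ i
  refine ⟨γ, ?_, ?_, ?_⟩
  · rw [hvγ]; exact Subtype.val_injective.comp e.injective
  · rw [hvγ]; exact hind.comp e e.injective
  · rw [hvγ, ← hspan]
    congr 1
    ext x; simp [Set.range_comp]
    constructor
    · rintro ⟨i, rfl⟩; exact (e i).2
    · intro hx; exact ⟨e.symm ⟨x, hx⟩, by simp⟩

/-- Exact skeleton (hybrid interpolative / CUR) decomposition: an `m × n` complex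
matrix of rank `r` factors exactly through an invertible `r × r` submatrix. -/
theorem exact_skeleton_decomposition (m n r : ℕ) (A : Matrix (Fin m) (Fin n) ℂ)
    (hrank : A.rank = r) :
    ∃ (ρ : Fin r → Fin m) (γ : Fin r → Fin n),
      Function.Injective ρ ∧ Function.Injective γ ∧
      IsUnit (A.submatrix ρ γ) ∧
      A = A.submatrix id γ * (A.submatrix ρ γ)⁻¹ * A.submatrix ρ id := by
  classical
  -- columns
  have hcols : Module.finrank ℂ (Submodule.span ℂ (Set.range Aᵀ)) = r := by
    exact (Matrix.rank_eq_finrank_span_cols A).symm.trans hrank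
  obtain ⟨γ, hγinj', hγind, hγspan⟩ := exists_subfamily Aᵀ hcols
  have hγinj : Function.Injective γ := fun a b hab => hγinj' (by show Aᵀ (γ a) = Aᵀ (γ b); rw [hab])
  set C : Matrix (Fin m) (Fin r) ℂ := A.submatrix id γ with hC
  have hCT : Cᵀ = Aᵀ ∘ γ := by ext k i; simp [hC, Matrix.transpose]; rfl
  have hrankC : C.rank = r := by
    rw [Matrix.rank_eq_finrank_span_cols, Matrix.col, hCT, hγspan, hcols]
  -- rows of C
  have hrows : Module.finrank ℂ (Submodule.span ℂ (Set.range C)) = r := by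
    exact (Matrix.rank_eq_finrank_span_row C).symm.trans hrankC
  obtain ⟨ρ, hρinj', hρind, -⟩ := exists_subfamily (fun i : Fin m => C i) hrows
  have hρinj : Function.Injective ρ := fun a b hab => hρinj' (by simp [hab])
  set M : Matrix (Fin r) (Fin r) ℂ := A.submatrix ρ γ with hM
  have hMrows : (fun i => M i) = (fun i : Fin m => C i) ∘ ρ := by
    ext i k; simp [hM, hC]
  have hMunit : IsUnit M := by
    rw [← Matrix.linearIndependent_rows_iff_isUnit]; show LinearIndependent ℂ (fun i => M i); rw [hMrows]; exact hρind
  -- interpolation matrix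
  have hmem : ∀ j : Fin n, Aᵀ j ∈ Submodule.span ℂ (Set.range (Aᵀ ∘ γ)) := by
    intro j
    rw [hγspan]
    exact Submodule.subset_span ⟨j, rfl⟩
  have hx : ∀ j : Fin n, ∃ c : Fin r → ℂ, (∑ k, c k • (Aᵀ ∘ γ) k) = Aᵀ j := by
    intro j
    exact (mem_span_range_iff_exists_fun ℂ).mp (hmem j)
  choose X hX using hx
  set Xm : Matrix (Fin r) (Fin n) ℂ := fun k j => X j k with hXm
  have hAC : A = C * Xm := by
    ext i j
    have := congrFun (hX j) i
    simp only [Finset.sum_apply, Pi.smul_apply, Function.comp_apply, smul_eq_mul,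
      Matrix.transpose_apply] at this
    simp only [Matrix.mul_apply, hC, hXm, Matrix.submatrix_apply, id_eq]
    exact this.symm.trans (Finset.sum_congr rfl fun k _ => mul_comm _ _)
  have hRM : A.submatrix ρ id = M * Xm := by
    ext i j
    have := congrFun (hX j) (ρ i)
    simp only [Finset.sum_apply, Pi.smul_apply, Function.comp_apply, smul_eq_mul,
      Matrix.transpose_apply] at this
    simp only [Matrix.mul_apply, hM, hXm, Matrix.submatrix_apply, id_eq]
    exact this.symm.trans (Finset.sum_congr rfl fun k _ => mul_comm _ _)
  refine ⟨ρ, γ, hρinj, hγinj, hMunit, ?_⟩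
  rw [hRM, ← hC, ← hM, Matrix.mul_assoc, ← Matrix.mul_assoc M⁻¹,
    Matrix.nonsing_inv_mul M ((Matrix.isUnit_iff_isUnit_det M).mp hMunit), Matrix.one_mul, ← hAC]
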